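/- For any connected graph G on n vertices with maximum degree Δ ≥ 2, the maximum number of full degree vertices in a spanning tree of G is at least n/(Δ(Δ-1)+1). -/

import Mathlib

open SimpleGraph

/-- Degree of `v` in `T` (as `Set.ncard` of the neighbor set). -/
noncomputable def deg {V : Type*} (T : SimpleGraph V) (v : V) : ℕ :=
  (T.neighborSet v).ncard

/-- `T` is a spanning tree of `G`. -/
def IsSpanningTree {V : Type*} (G T : SimpleGraph V) : Prop :=
  T ≤ G ∧ T.IsTree

/-- Number of full degree vertices of the spanning tree `T` of `G`. -/
noncomputable def fullDegCount {V : Type*} (G T : SimpleGraph V) : ℕ :=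
  {v : V | deg T v = deg G v}.ncard

/-- Number of leaves of `T`. -/
noncomputable def leafCount {V : Type*} (T : SimpleGraph V) : ℕ :=
  {v : V | deg T v = 1}.ncard

/-- `φ(G)`: maximum number of full degree vertices over all spanning trees. -/
noncomputable def phi {V : Type*} (G : SimpleGraph V) : ℕ :=
  sSup {k | ∃ T : SimpleGraph V, IsSpanningTree G T ∧ fullDegCount G T = k}

/-- `λ(G)`: maximum number of leaves over all spanning trees. -/
noncomputable def lam {V : Type*} (G : SimpleGraph V) : ℕ :=
  sSup {k | ∃ T : SimpleGraph V, IsSpanningTree G T ∧ leafCount T = k}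

/-- `S` is a connected dominating set of `G`. -/
def IsConnDomSet {V : Type*} (G : SimpleGraph V) (S : Set V) : Prop :=
  (G.induce S).Connected ∧ ∀ v : V, v ∈ S ∨ ∃ u ∈ S, G.Adj u v

/-- `γ_C(G)`: minimum size of a connected dominating set. -/
noncomputable def gammaC {V : Type*} (G : SimpleGraph V) : ℕ :=
  sInf {k | ∃ S : Set V, IsConnDomSet G S ∧ S.ncard = k}

/-- Closed neighborhood of `v` in `G`. -/
def closedNbhd {V : Type*} (G : SimpleGraph V) (v : V) : Set V :=
  insert v (G.neighborSet v)

/-- The square of a graph: join vertices at distance at most 2. -/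
def square {V : Type*} (G : SimpleGraph V) : SimpleGraph V where
  Adj u v := u ≠ v ∧ G.Reachable u v ∧ G.dist u v ≤ 2
  symm := by
    refine ⟨?_⟩
    rintro u v ⟨h1, h2, h3⟩
    exact ⟨h1.symm, h2.symm, by rwa [SimpleGraph.dist_comm]⟩
  loopless := by refine ⟨?_⟩; rintro v ⟨h, -⟩; exact h rfl

namespace FDST

variable {V : Type*}

lemma first_edge_mem {G : SimpleGraph V} {u v : V} (p : G.Walk u v) (hp : ¬p.Nil) :
    s(u, p.getVert 1) ∈ p.edges := by
  cases p with
  | nil => simp at hp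
  | cons h q => simp [Walk.getVert_cons_succ, Walk.getVert_zero]

lemma cycle_start_two_nbrs {G : SimpleGraph V} {a : V} {c : G.Walk a a}
    (hc : c.IsCycle) :
    ∃ x z, x ∈ c.support ∧ z ∈ c.support ∧ x ≠ z ∧ G.Adj a x ∧ G.Adj a z := by
  cases c with
  | nil => exact absurd hc Walk.IsCycle.not_of_nil
  | @cons _ b _ h q =>
    rw [Walk.cons_isCycle_iff] at hc
    obtain ⟨hq, he⟩ := hc
    have hqn : ¬ q.Nil := by
      intro hn
      exact h.ne (hn.eq ▸ rfl)
    have hrn : ¬ q.reverse.Nil := by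
      rw [Walk.nil_iff_length_eq, Walk.length_reverse]
      rw [Walk.nil_iff_length_eq] at hqn
      exact hqn
    have hadj : G.Adj a (q.reverse.getVert 1) := q.reverse.adj_snd hrn
    have hmem : s(a, q.reverse.getVert 1) ∈ q.edges := by
      have := first_edge_mem q.reverse hrn
      rwa [Walk.edges_reverse, List.mem_reverse] at this
    have hne : b ≠ q.reverse.getVert 1 := by
      intro hbz
      rw [← hbz] at hmem
      exact he hmem
    refine ⟨b, q.reverse.getVert 1, ?_, ?_, hne, h, hadj⟩
    · rw [Walk.support_cons]
      exact List.mem_cons_of_mem _ q.start_mem_support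
    · rw [Walk.support_cons]
      exact List.mem_cons_of_mem _ (q.snd_mem_support_of_mem_edges hmem)

/-- union of stars centered at `S`. -/
def starUnion (G : SimpleGraph V) (S : Set V) : SimpleGraph V where
  Adj u v := G.Adj u v ∧ (u ∈ S ∨ v ∈ S)
  symm := ⟨fun u v h => ⟨h.1.symm, h.2.symm⟩⟩
  loopless := ⟨fun v h => G.loopless.irrefl v h.1⟩

lemma starUnion_acyclic {G : SimpleGraph V} {S : Set V}
    (hd : ∀ s ∈ S, ∀ t ∈ S, s ≠ t → ∀ u, G.Adj s u → G.Adj t u → False) :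
    (starUnion G S).IsAcyclic := by
  classical
  intro v c hc
  by_cases hsup : ∀ w ∈ c.support, w ∈ S
  · obtain ⟨x, z, hx, hz, hne, hax, haz⟩ := cycle_start_two_nbrs hc
    exact hd x (hsup x hx) z (hsup z hz) hne v hax.1.symm haz.1.symm
  · push_neg at hsup
    obtain ⟨a, ha, haS⟩ := hsup
    obtain ⟨x, z, _, _, hne, hax, haz⟩ := cycle_start_two_nbrs (hc.rotate ha)
    have hxS : x ∈ S := hax.2.resolve_left haS
    have hzS : z ∈ S := haz.2.resolve_left haS
    exact hd x hxS z hzS hne a hax.1.symm haz.1.symm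

lemma isAcyclic_sup_edge {T : SimpleGraph V} (hT : T.IsAcyclic) {u v : V}
    (hne : u ≠ v) (hr : ¬T.Reachable u v) : (T ⊔ edge u v).IsAcyclic := by
  intro w c hc
  by_cases he : s(u, v) ∈ c.edges
  · have h2 : (T ⊔ edge u v).Adj u v ∧
        ((T ⊔ edge u v) \ fromEdgeSet {s(u, v)}).Reachable u v :=
      (adj_and_reachable_delete_edges_iff_exists_cycle).2 ⟨w, c, hc, he⟩
    apply hr
    refine h2.2.mono ?_
    intro a b hab
    rcases hab with ⟨hab1, hab2⟩
    rcases hab1 with h | h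
    · exact h
    · exfalso
      apply hab2
      rw [fromEdgeSet_adj]
      rw [edge_adj] at h
      refine ⟨?_, h.2⟩
      rcases h.1 with ⟨rfl, rfl⟩ | ⟨rfl, rfl⟩
      · rfl
      · exact Sym2.eq_swap
  · have hsub : ∀ e ∈ c.edges, e ∈ T.edgeSet := by
      intro e hee
      have hmem := c.edges_subset_edgeSet hee
      rw [edgeSet_sup] at hmem
      rcases hmem with h | h
      · exact h
      · exfalso
        rw [edge, edgeSet_fromEdgeSet] at h
        obtain ⟨h1, -⟩ := h
        rw [Set.mem_singleton_iff] at h1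
        subst h1
        exact he hee
    exact hT (c.transfer T hsub) (hc.transfer hsub)

end FDST

namespace FDST

lemma exists_max_acyclic [Fintype V] {G H : SimpleGraph V} (hG : G.Connected)
    (hH : H ≤ G) (hac : H.IsAcyclic) :
    ∃ T, H ≤ T ∧ T ≤ G ∧ T.Connected ∧ T.IsAcyclic := by
  classical
  haveI : Finite (SimpleGraph V) :=
    Finite.of_injective (fun (K : SimpleGraph V) => K.Adj)
      (fun a b h => SimpleGraph.ext h)
  obtain ⟨T, hTmem, hmax⟩ := Set.Finite.exists_maximalFor
    (fun T : SimpleGraph V => T.edgeSet.ncard)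
    {T | H ≤ T ∧ T ≤ G ∧ T.IsAcyclic} (Set.toFinite _)
    ⟨H, le_refl H, hH, hac⟩
  obtain ⟨hHT, hTG, hTac⟩ := hTmem
  have hreach : ∀ a b, G.Adj a b → T.Reachable a b := by
    intro a b hab
    by_contra hr
    have hne : a ≠ b := hab.ne
    have hmem' : T ⊔ edge a b ∈ {T | H ≤ T ∧ T ≤ G ∧ T.IsAcyclic} := by
      refine ⟨hHT.trans le_sup_left, sup_le hTG ?_, isAcyclic_sup_edge hTac hne hr⟩
      intro x y hxy
      rw [edge_adj] at hxy
      rcases hxy.1 with ⟨rfl, rfl⟩ | ⟨rfl, rfl⟩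
      · exact hab
      · exact hab.symm
    have hlt : T.edgeSet.ncard < (T ⊔ edge a b).edgeSet.ncard := by
      apply Set.ncard_lt_ncard
      · constructor
        · exact edgeSet_mono le_sup_left
        · intro hsub
          have : s(a, b) ∈ (T ⊔ edge a b).edgeSet := by
            rw [mem_edgeSet]
            exact Or.inr ((edge_adj a b a b).2 ⟨Or.inl ⟨rfl, rfl⟩, hne⟩)
          have hTadj : T.Adj a b := (mem_edgeSet T).1 (hsub this)
          exact hr hTadj.reachable
      · exact Set.toFinite _
    have : (T ⊔ edge a b).edgeSet.ncard ≤ T.edgeSet.ncard := hmax hmem' (le_of_lt hlt)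
    omega
  have hconn : T.Connected := by
    rw [connected_iff]
    refine ⟨fun x y => ?_, hG.nonempty⟩
    obtain ⟨p⟩ := hG.preconnected x y
    induction p with
    | nil => exact Reachable.refl _
    | cons h q ih => exact (hreach _ _ h).trans ih
  exact ⟨T, hHT, hTG, hconn, hTac⟩

end FDST


open FDST in
theorem stmt0 {V : Type*} [Fintype V] (G : SimpleGraph V) (n Δ : ℕ)
    (hn : n = Fintype.card V) (hG : G.Connected) (hΔ2 : 2 ≤ Δ)
    (hΔ : ∀ v : V, deg G v ≤ Δ) :
    (n : ℝ) / (Δ * (Δ - 1) + 1) ≤ (phi G : ℝ) := by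
  classical
  -- translate deg to degree
  have hdeg : ∀ v, deg G v = (G.neighborFinset v).card := by
    intro v
    rw [deg, neighborFinset_def, Set.ncard_eq_toFinset_card']
  -- maximal family with pairwise disjoint neighborhoods
  set P : Finset V → Prop :=
    fun A => ∀ s ∈ A, ∀ t ∈ A, s ≠ t → ∀ u, G.Adj s u → G.Adj t u → False with hP
  obtain ⟨S, hS, hSmax⟩ := Set.Finite.exists_maximalFor
    (fun A : Finset V => A.card) {A | P A} (Set.toFinite _)
    ⟨∅, fun s hs => absurd hs (Finset.notMem_empty s)⟩
  simp only [Set.mem_setOf_eq] at hS hSmax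
  -- every vertex outside S has a common neighbor with some member of S
  have hdom : ∀ v, v ∉ S → ∃ s ∈ S, ∃ u, G.Adj s u ∧ G.Adj v u := by
    intro v hv
    by_contra hcon
    push_neg at hcon
    have hPins : P (insert v S) := by
      intro s hs t ht hst u hsu htu
      rcases Finset.mem_insert.1 hs with hsv | hsS
      · rcases Finset.mem_insert.1 ht with htv | htS
        · exact hst (hsv.trans htv.symm)
        · exact hcon t htS u htu (hsv ▸ hsu)
      · rcases Finset.mem_insert.1 ht with htv | htS
        · exact hcon s hsS u hsu (htv ▸ htu)
        · exact hS s hsS t htS hst u hsu htu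
    have h1 := hSmax hPins (Finset.card_le_card (Finset.subset_insert v S))
    have h2 := Finset.card_insert_of_notMem hv
    omega
  -- counting
  have hcount : Fintype.card V ≤ S.card * (Δ * (Δ - 1) + 1) := by
    have hcover : Finset.univ ⊆ S.biUnion (fun s =>
        insert s ((G.neighborFinset s).biUnion fun u => G.neighborFinset u \ {s})) := by
      intro v _
      rw [Finset.mem_biUnion]
      by_cases hv : v ∈ S
      · exact ⟨v, hv, Finset.mem_insert_self _ _⟩
      · obtain ⟨s, hs, u, hsu, hvu⟩ := hdom v hv
        refine ⟨s, hs, Finset.mem_insert.2 (Or.inr ?_)⟩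
        rw [Finset.mem_biUnion]
        refine ⟨u, ?_, ?_⟩
        · rwa [mem_neighborFinset]
        · rw [Finset.mem_sdiff, mem_neighborFinset, Finset.mem_singleton]
          exact ⟨hvu.symm, fun h => hv (h ▸ hs)⟩
    have hball : ∀ s, (insert s ((G.neighborFinset s).biUnion fun u =>
        G.neighborFinset u \ {s})).card ≤ Δ * (Δ - 1) + 1 := by
      intro s
      refine (Finset.card_insert_le _ _).trans ?_
      have h1 : ((G.neighborFinset s).biUnion fun u =>
          G.neighborFinset u \ {s}).card ≤ Δ * (Δ - 1) := by
        refine (Finset.card_biUnion_le).trans ?_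
        have h2 : ∀ u ∈ G.neighborFinset s, (G.neighborFinset u \ {s}).card ≤ Δ - 1 := by
          intro u hu
          rw [mem_neighborFinset] at hu
          have hsu : s ∈ G.neighborFinset u := (mem_neighborFinset _ _ _).2 hu.symm
          rw [Finset.sdiff_singleton_eq_erase, Finset.card_erase_of_mem hsu]
          have := hΔ u
          rw [hdeg u] at this
          omega
        calc ∑ u ∈ G.neighborFinset s, (G.neighborFinset u \ {s}).card
            ≤ ∑ _u ∈ G.neighborFinset s, (Δ - 1) := Finset.sum_le_sum h2
          _ = (G.neighborFinset s).card * (Δ - 1) := by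
              rw [Finset.sum_const, smul_eq_mul]
          _ ≤ Δ * (Δ - 1) := by
              have := hΔ s
              rw [hdeg s] at this
              exact Nat.mul_le_mul_right _ this
      omega
    calc Fintype.card V = Finset.univ.card := (Finset.card_univ).symm
      _ ≤ _ := Finset.card_le_card hcover
      _ ≤ ∑ s ∈ S, (insert s ((G.neighborFinset s).biUnion fun u =>
            G.neighborFinset u \ {s})).card := Finset.card_biUnion_le
      _ ≤ ∑ _s ∈ S, (Δ * (Δ - 1) + 1) := Finset.sum_le_sum (fun s _ => hball s)
      _ = S.card * (Δ * (Δ - 1) + 1) := by rw [Finset.sum_const, smul_eq_mul]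
  -- star union and spanning tree
  have hd : ∀ s ∈ (↑S : Set V), ∀ t ∈ (↑S : Set V), s ≠ t →
      ∀ u, G.Adj s u → G.Adj t u → False := by
    intro s hs t ht hst u h1 h2
    exact hS s hs t ht hst u h1 h2
  have hHG : starUnion G (↑S : Set V) ≤ G := fun a b h => h.1
  obtain ⟨T, hHT, hTG, hTconn, hTac⟩ :=
    exists_max_acyclic hG hHG (starUnion_acyclic hd)
  -- members of S have full degree in T
  have hfull : ∀ s ∈ S, deg T s = deg G s := by
    intro s hs
    have hset : T.neighborSet s = G.neighborSet s := by
      apply Set.Subset.antisymm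
      · exact fun u hu => hTG hu
      · exact fun u hu => hHT ⟨hu, Or.inl hs⟩
    rw [deg, deg, hset]
  have hcard : S.card ≤ fullDegCount G T := by
    rw [fullDegCount, ← Set.ncard_coe_finset]
    exact Set.ncard_le_ncard (fun s hs => hfull s hs) (Set.toFinite _)
  -- phi bound
  have hbdd : BddAbove {k | ∃ T : SimpleGraph V,
      IsSpanningTree G T ∧ fullDegCount G T = k} := by
    refine ⟨Fintype.card V, ?_⟩
    rintro k ⟨T', -, rfl⟩
    rw [fullDegCount]
    calc {v : V | deg T' v = deg G v}.ncard ≤ (Set.univ : Set V).ncard :=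
          Set.ncard_le_ncard (Set.subset_univ _) (Set.toFinite _)
      _ = Fintype.card V := by rw [Set.ncard_univ, Nat.card_eq_fintype_card]
  have hphi : fullDegCount G T ≤ phi G :=
    le_csSup hbdd ⟨T, ⟨hTG, hTconn, hTac⟩, rfl⟩
  -- wrap up
  have hnat : n ≤ phi G * (Δ * (Δ - 1) + 1) := by
    calc n = Fintype.card V := hn
      _ ≤ S.card * (Δ * (Δ - 1) + 1) := hcount
      _ ≤ phi G * (Δ * (Δ - 1) + 1) := by
          exact Nat.mul_le_mul_right _ (hcard.trans hphi)
  have hden : (0 : ℝ) < (Δ : ℝ) * ((Δ : ℝ) - 1) + 1 := by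
    have : (2 : ℝ) ≤ (Δ : ℝ) := by exact_mod_cast hΔ2
    nlinarith
  rw [div_le_iff₀ hden]
  have hcast : ((Δ * (Δ - 1) + 1 : ℕ) : ℝ) = (Δ : ℝ) * ((Δ : ℝ) - 1) + 1 := by
    rw [Nat.cast_add, Nat.cast_mul, Nat.cast_sub (by omega), Nat.cast_one]
  calc (n : ℝ) ≤ ((phi G * (Δ * (Δ - 1) + 1) : ℕ) : ℝ) := by exact_mod_cast hnat
    _ = (phi G : ℝ) * ((Δ : ℝ) * ((Δ : ℝ) - 1) + 1) := by
        rw [Nat.cast_mul, hcast]
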